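/- arXiv:2302.13456 — 5 statements merged into one kernel-verified Lean document; each statement's English description precedes it below -/
import Mathlib

section
/- For the domain D(α) = {(z,w) ∈ ℂ² : | |w|² − |z|² | < (1+|z|²+|w|²)^{−α}} with 2 < α < 3, the function z is square-integrable on D(α); in particular ∫_{D(α)} |z|² dV ≤ 2π²/(α−2) up to the estimate ∫₀^∞ r(1+r)^{−α} dr < ∫₀^∞ (1+r)^{1−α} dr = 1/(α−2). -/
open MeasureTheory Real

/-- The domain `D(α) = {(z,w) ∈ ℂ² : | |w|² − |z|² | < (1+|z|²+|w|²)^{−α}}`. -/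
def HuangLiDomain (α : ℝ) : Set (ℂ × ℂ) :=
  {p : ℂ × ℂ | |‖p.2‖ ^ 2 - ‖p.1‖ ^ 2| < (1 + ‖p.1‖ ^ 2 + ‖p.2‖ ^ 2) ^ (-α)}

open Set
open scoped ENNReal NNReal

lemma oneD_integrable {p : ℝ} (hp : p < -1) :
    IntegrableOn (fun r : ℝ => (1 + r) ^ p) (Set.Ioi 0) := by
  have hd : ∀ x ∈ Ici (0:ℝ), HasDerivAt (fun t => (1+t) ^ (p+1) / (p+1)) ((1+x) ^ p) x := by
    intro x hx
    have hx0 : (0:ℝ) < 1 + x := by simp at hx; linarith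
    have h1 : HasDerivAt (fun t : ℝ => 1 + t) 1 x := (hasDerivAt_id x).const_add 1
    have h2 := (h1.rpow_const (p := p+1) (Or.inl hx0.ne')).div_const (p+1)
    rw [add_sub_cancel_right, one_mul, mul_div_cancel_left₀ _ (show p + 1 ≠ 0 by linarith)] at h2
    exact h2
  have ht : Filter.Tendsto (fun t : ℝ => (1+t) ^ (p+1) / (p+1)) Filter.atTop (nhds (0 / (p+1))) := by
    apply Filter.Tendsto.div_const
    have : Filter.Tendsto (fun t : ℝ => 1 + t) Filter.atTop Filter.atTop :=
      Filter.tendsto_atTop_add_const_left _ 1 Filter.tendsto_id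
    have h0 : Filter.Tendsto (fun y : ℝ => y ^ (p+1)) Filter.atTop (nhds 0) := by
      simpa only [neg_neg] using tendsto_rpow_neg_atTop (by linarith : 0 < -(p+1))
    exact h0.comp this
  exact integrableOn_Ioi_deriv_of_nonneg' hd
    (fun t ht => rpow_nonneg (by simp at ht; linarith) p) ht

lemma oneD_integral {p : ℝ} (hp : p < -1) :
    ∫ r in Set.Ioi (0:ℝ), (1 + r) ^ p = -1 / (p+1) := by
  have hd : ∀ x ∈ Ici (0:ℝ), HasDerivAt (fun t => (1+t) ^ (p+1) / (p+1)) ((1+x) ^ p) x := by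
    intro x hx
    have hx0 : (0:ℝ) < 1 + x := by simp at hx; linarith
    have h1 : HasDerivAt (fun t : ℝ => 1 + t) 1 x := (hasDerivAt_id x).const_add 1
    have h2 := (h1.rpow_const (p := p+1) (Or.inl hx0.ne')).div_const (p+1)
    rw [add_sub_cancel_right, one_mul, mul_div_cancel_left₀ _ (show p + 1 ≠ 0 by linarith)] at h2
    exact h2
  have ht : Filter.Tendsto (fun t : ℝ => (1+t) ^ (p+1) / (p+1)) Filter.atTop (nhds (0 / (p+1))) := by
    apply Filter.Tendsto.div_const
    have h1 : Filter.Tendsto (fun t : ℝ => 1 + t) Filter.atTop Filter.atTop :=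
      Filter.tendsto_atTop_add_const_left _ 1 Filter.tendsto_id
    have h0 : Filter.Tendsto (fun y : ℝ => y ^ (p+1)) Filter.atTop (nhds 0) := by
      simpa only [neg_neg] using tendsto_rpow_neg_atTop (by linarith : 0 < -(p+1))
    exact h0.comp h1
  have := integral_Ioi_of_hasDerivAt_of_tendsto' hd (oneD_integrable hp) ht
  rw [this]
  norm_num [Real.one_rpow, neg_div]

lemma part4 {α : ℝ} (hα1 : 2 < α) :
    ∫ r in Set.Ioi (0:ℝ), (1 + r) ^ (1 - α) = 1 / (α - 2) := by
  rw [oneD_integral (by linarith : (1:ℝ) - α < -1)]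
  rw [show (1:ℝ) - α + 1 = -(α - 2) by ring, div_neg, neg_div, neg_neg]

lemma part3 {α : ℝ} (hα1 : 2 < α) :
    (∫ r in Set.Ioi (0:ℝ), r * (1 + r) ^ (-α)) <
      ∫ r in Set.Ioi (0:ℝ), (1 + r) ^ (1 - α) := by
  have h1 : IntegrableOn (fun r : ℝ => (1 + r) ^ ((1:ℝ) - α)) (Set.Ioi 0) :=
    oneD_integrable (by linarith)
  have h2 : IntegrableOn (fun r : ℝ => (1 + r) ^ (-α)) (Set.Ioi 0) :=
    oneD_integrable (by linarith)
  have key : ∀ r ∈ Set.Ioi (0:ℝ),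
      r * (1 + r) ^ (-α) = (1 + r) ^ ((1:ℝ) - α) - (1 + r) ^ (-α) := by
    intro r hr
    have hr0 : (0:ℝ) < 1 + r := by simp at hr; linarith
    rw [show (1:ℝ) - α = 1 + (-α) by ring, Real.rpow_add hr0, Real.rpow_one]
    ring
  rw [setIntegral_congr_fun measurableSet_Ioi key, integral_sub h1 h2,
    oneD_integral (show -α < -1 by linarith)]
  have hpos : 0 < -1 / (-α + 1) := by
    rw [div_pos_iff]
    right; constructor <;> linarith
  linarith

lemma isOpen_HLD (α : ℝ) : IsOpen (HuangLiDomain α) := by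
  apply isOpen_lt
  · exact ((continuous_snd.norm.pow 2).sub (continuous_fst.norm.pow 2)).abs
  · refine Continuous.rpow_const ?_ fun p => Or.inl ?_
    · exact (continuous_const.add (continuous_fst.norm.pow 2)).add (continuous_snd.norm.pow 2)
    · positivity

lemma fiber_bound {α : ℝ} (hα : 0 ≤ α) (z : ℂ) :
    volume {w : ℂ | (z, w) ∈ HuangLiDomain α} ≤
      ENNReal.ofReal (2 * (1 + ‖z‖ ^ 2) ^ (-α)) * ENNReal.ofReal π := by
  set a : ℝ := ‖z‖ ^ 2 with ha
  set ε : ℝ := (1 + ‖z‖ ^ 2) ^ (-α) with hε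
  have ha0 : 0 ≤ a := by positivity
  have hε0 : 0 < ε := rpow_pos_of_pos (by positivity) _
  set m : ℝ := max (a - ε) 0 with hm
  have hsub : {w : ℂ | (z, w) ∈ HuangLiDomain α} ⊆
      Metric.ball 0 (√(a + ε)) \ Metric.ball 0 (√m) := by
    intro w hw
    simp only [HuangLiDomain, Set.mem_setOf_eq] at hw
    have hb : (1 + ‖z‖ ^ 2 + ‖w‖ ^ 2) ^ (-α) ≤ ε := by
      apply Real.rpow_le_rpow_of_nonpos (by positivity)
        (by nlinarith [sq_nonneg ‖w‖]) (by linarith)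
    have habs : |‖w‖ ^ 2 - a| < ε := lt_of_lt_of_le hw hb
    rw [abs_lt] at habs
    constructor
    · rw [Metric.mem_ball, dist_zero_right]
      rw [show ‖w‖ = √(‖w‖ ^ 2) by rw [Real.sqrt_sq (norm_nonneg w)]]
      exact Real.sqrt_lt_sqrt (by positivity) (by linarith)
    · rw [Metric.mem_ball, dist_zero_right, not_lt]
      rw [show ‖w‖ = √(‖w‖ ^ 2) by rw [Real.sqrt_sq (norm_nonneg w)]]
      apply Real.sqrt_le_sqrt
      rw [hm, max_le_iff]
      constructor
      · linarith
      · positivity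
  refine le_trans (measure_mono hsub) ?_
  have hmono : Metric.ball (0:ℂ) (√m) ⊆ Metric.ball 0 (√(a + ε)) := by
    apply Metric.ball_subset_ball
    apply Real.sqrt_le_sqrt
    rw [hm, max_le_iff]
    constructor <;> linarith
  rw [measure_diff hmono measurableSet_ball.nullMeasurableSet
    (ne_of_lt (measure_ball_lt_top))]
  rw [Complex.volume_ball, Complex.volume_ball]
  have hconv : ∀ t : ℝ, 0 ≤ t → (ENNReal.ofReal (√t)) ^ 2 = ENNReal.ofReal t := by
    intro t ht
    rw [← ENNReal.ofReal_pow (Real.sqrt_nonneg t), Real.sq_sqrt ht]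
  rw [hconv _ (by linarith), hconv _ (le_max_right _ _)]
  have hπ : (NNReal.pi : ℝ≥0∞) = ENNReal.ofReal π := by
    rw [← ENNReal.ofReal_coe_nnreal, NNReal.coe_real_pi]
  rw [hπ, ← ENNReal.sub_mul (by intro _ _; exact ENNReal.ofReal_ne_top)]
  apply mul_le_mul_left
  rw [← ENNReal.ofReal_sub _ (le_max_right _ _)]
  apply ENNReal.ofReal_le_ofReal
  rcases le_total (a - ε) 0 with h | h
  · rw [max_eq_right h]; linarith
  · rw [max_eq_left h]; linarith

lemma g_integrable {α : ℝ} (hα1 : 2 < α) :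
    Integrable (fun z : ℂ => ‖z‖ ^ 2 * (2 * (1 + ‖z‖ ^ 2) ^ (-α))) := by
  have hnr : (Module.finrank ℝ ℂ : ℝ) < 2 * α - 2 := by
    rw [Complex.finrank_real_complex]; norm_num; linarith
  refine ((integrable_rpow_neg_one_add_norm_sq (μ := (volume : Measure ℂ)) hnr).const_mul
    2).mono' ?_ (Filter.Eventually.of_forall fun z => ?_)
  · apply Continuous.aestronglyMeasurable
    refine (continuous_norm.pow 2).mul (continuous_const.mul ?_)
    exact Continuous.rpow_const (continuous_const.add (continuous_norm.pow 2))
      fun z => Or.inl (by positivity)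
  · have ht0 : (0:ℝ) < (1 + ‖z‖ ^ 2) ^ (-α) := rpow_pos_of_pos (by positivity) _
    rw [Real.norm_eq_abs, abs_of_nonneg (by positivity)]
    rw [show -(2 * α - 2) / 2 = 1 - α by ring]
    rw [show (1:ℝ) - α = 1 + (-α) by ring, Real.rpow_add (by positivity), Real.rpow_one]
    nlinarith [sq_nonneg ‖z‖]

lemma g_integral {α : ℝ} (hα1 : 2 < α) :
    ∫ z : ℂ, ‖z‖ ^ 2 * (2 * (1 + ‖z‖ ^ 2) ^ (-α)) =
      2 * π * ∫ s in Set.Ioi (0:ℝ), s * (1 + s) ^ (-α) := by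
  have h := integral_fun_norm_addHaar (volume : Measure ℂ)
    (fun y : ℝ => y ^ 2 * (2 * (1 + y ^ 2) ^ (-α)))
  rw [Complex.finrank_real_complex] at h
  rw [h]
  have hball : (volume : Measure ℂ).real (Metric.ball 0 1) = π := by
    rw [measureReal_def, Complex.volume_ball]
    simp [NNReal.coe_real_pi]
  rw [hball]
  have hsub := integral_comp_rpow_Ioi (fun s : ℝ => s * (1 + s) ^ (-α)) (p := 2) two_ne_zero
  have heq : ∀ x ∈ Set.Ioi (0:ℝ),
      (|2| * x ^ ((2:ℝ) - 1)) • ((fun s : ℝ => s * (1 + s) ^ (-α)) (x ^ (2:ℝ))) =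
        x ^ (2 - 1) • (x ^ 2 * (2 * (1 + x ^ 2) ^ (-α))) := by
    intro x hx
    have h2 : x ^ (2:ℝ) = x ^ 2 := by
      rw [show (2:ℝ) = ((2:ℕ) : ℝ) by norm_num, Real.rpow_natCast]
    have h1 : x ^ ((2:ℝ) - 1) = x := by norm_num
    simp only [h2, h1, smul_eq_mul, pow_one, abs_two]
    ring
  rw [setIntegral_congr_fun measurableSet_Ioi heq] at hsub
  rw [hsub]
  simp [smul_eq_mul]
  ring

lemma main_lintegral {α : ℝ} (hα1 : 2 < α) :
    ∫⁻ p in HuangLiDomain α, ENNReal.ofReal (‖p.1‖ ^ 2) ≤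
      ENNReal.ofReal (π * ∫ z : ℂ, ‖z‖ ^ 2 * (2 * (1 + ‖z‖ ^ 2) ^ (-α))) := by
  have hD : MeasurableSet (HuangLiDomain α) := (isOpen_HLD α).measurableSet
  have hmeas : Measurable fun p : ℂ × ℂ => ENNReal.ofReal (‖p.1‖ ^ 2) :=
    (measurable_fst.norm.pow measurable_const).ennreal_ofReal
  have h1 : ∫⁻ p in HuangLiDomain α, ENNReal.ofReal (‖p.1‖ ^ 2) =
      ∫⁻ z : ℂ, ENNReal.ofReal (‖z‖ ^ 2) * volume {w : ℂ | (z, w) ∈ HuangLiDomain α} := by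
    rw [← lintegral_indicator hD, Measure.volume_eq_prod,
      lintegral_prod _ ((hmeas.indicator hD).aemeasurable)]
    congr 1
    ext z
    have : ∀ w : ℂ, (HuangLiDomain α).indicator (fun p : ℂ × ℂ => ENNReal.ofReal (‖p.1‖ ^ 2)) (z, w)
        = Set.indicator {w : ℂ | (z, w) ∈ HuangLiDomain α}
            (fun _ => ENNReal.ofReal (‖z‖ ^ 2)) w := by
      intro w
      rfl
    have hfib : MeasurableSet {w : ℂ | (z, w) ∈ HuangLiDomain α} :=
      hD.preimage measurable_prodMk_left
    rw [lintegral_congr this, lintegral_indicator_const hfib]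
  rw [h1]
  have h2 : ∀ z : ℂ, ENNReal.ofReal (‖z‖ ^ 2) * volume {w : ℂ | (z, w) ∈ HuangLiDomain α} ≤
      ENNReal.ofReal (π * (‖z‖ ^ 2 * (2 * (1 + ‖z‖ ^ 2) ^ (-α)))) := by
    intro z
    calc ENNReal.ofReal (‖z‖ ^ 2) * volume {w : ℂ | (z, w) ∈ HuangLiDomain α}
        ≤ ENNReal.ofReal (‖z‖ ^ 2) *
          (ENNReal.ofReal (2 * (1 + ‖z‖ ^ 2) ^ (-α)) * ENNReal.ofReal π) :=
          mul_le_mul_right (fiber_bound (by linarith) z) _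
      _ = ENNReal.ofReal (π * (‖z‖ ^ 2 * (2 * (1 + ‖z‖ ^ 2) ^ (-α)))) := by
          rw [← ENNReal.ofReal_mul (by positivity), ← ENNReal.ofReal_mul (by positivity)]
          ring_nf
  refine le_trans (lintegral_mono h2) ?_
  rw [← ofReal_integral_eq_lintegral_ofReal (((g_integrable hα1).const_mul π))
    (Filter.Eventually.of_forall fun z => by positivity)]
  rw [integral_const_mul]

/-- For `2 < α < 3`, the coordinate function `z` is square integrable on `D(α)`,
and `∫_{D(α)} |z|² dV ≤ 2π²/(α−2)`; moreover the underlying one–dimensional estimate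
`∫₀^∞ r (1+r)^{−α} dr < ∫₀^∞ (1+r)^{1−α} dr = 1/(α−2)` holds. -/
theorem stmt0 (α : ℝ) (hα1 : 2 < α) (hα2 : α < 3) :
    IntegrableOn (fun p : ℂ × ℂ => ‖p.1‖ ^ 2) (HuangLiDomain α) volume ∧
    (∫ p in HuangLiDomain α, ‖p.1‖ ^ 2) ≤ 2 * π ^ 2 / (α - 2) ∧
    (∫ r in Set.Ioi (0 : ℝ), r * (1 + r) ^ (-α)) <
      (∫ r in Set.Ioi (0 : ℝ), (1 + r) ^ (1 - α)) ∧
    (∫ r in Set.Ioi (0 : ℝ), (1 + r) ^ (1 - α)) = 1 / (α - 2) := by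
  have h4 := part4 hα1
  have h3 := part3 hα1
  have hI : (∫ r in Set.Ioi (0 : ℝ), r * (1 + r) ^ (-α)) < 1 / (α - 2) := h4 ▸ h3
  have hI0 : 0 ≤ ∫ r in Set.Ioi (0 : ℝ), r * (1 + r) ^ (-α) :=
    setIntegral_nonneg measurableSet_Ioi fun r hr => by
      have : (0:ℝ) < r := hr
      positivity
  set B : ℝ := π * ∫ z : ℂ, ‖z‖ ^ 2 * (2 * (1 + ‖z‖ ^ 2) ^ (-α)) with hB
  have hBval : B = 2 * π ^ 2 * ∫ r in Set.Ioi (0 : ℝ), r * (1 + r) ^ (-α) := by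
    rw [hB, g_integral hα1]; ring
  have hBle : B ≤ 2 * π ^ 2 / (α - 2) := by
    calc B = 2 * π ^ 2 * ∫ r in Set.Ioi (0 : ℝ), r * (1 + r) ^ (-α) := hBval
      _ ≤ 2 * π ^ 2 * (1 / (α - 2)) := mul_le_mul_of_nonneg_left hI.le (by positivity)
      _ = 2 * π ^ 2 / (α - 2) := by ring
  have hL := main_lintegral hα1
  have hfin : (∫⁻ p in HuangLiDomain α, ENNReal.ofReal (‖p.1‖ ^ 2)) < ⊤ :=
    lt_of_le_of_lt hL ENNReal.ofReal_lt_top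
  have hmeasf : AEStronglyMeasurable (fun p : ℂ × ℂ => ‖p.1‖ ^ 2)
      (volume.restrict (HuangLiDomain α)) :=
    ((continuous_fst.norm.pow 2)).aestronglyMeasurable.restrict
  have hint : IntegrableOn (fun p : ℂ × ℂ => ‖p.1‖ ^ 2) (HuangLiDomain α) volume := by
    refine ⟨hmeasf, ?_⟩
    rw [hasFiniteIntegral_iff_ofReal (Filter.Eventually.of_forall fun p => by positivity)]
    exact hfin
  refine ⟨hint, ?_, h3, h4⟩
  rw [integral_eq_lintegral_of_nonneg_ae (Filter.Eventually.of_forall fun p => by positivity)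
    hmeasf]
  refine ENNReal.toReal_le_of_le_ofReal (div_nonneg (by positivity) (by linarith)) ?_
  exact le_trans hL (ENNReal.ofReal_le_ofReal hBle)
end

section
/- For the domain D(α) with 2 < α < 3, any monomial z^p w^q with p + q ≥ 2 fails to be square-integrable on D(α), i.e. ∫_{D(α)} |z^p w^q|² dV = +∞. -/
open MeasureTheory Real
open scoped ENNReal NNReal

lemma annulus_vol {a e : ℝ} (ha : 0 ≤ a) (he : 0 < e) :
    volume {w : ℂ | a ≤ ‖w‖ ∧ ‖w‖ ^ 2 < a ^ 2 + e} = ENNReal.ofReal e * NNReal.pi := by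
  have hb : a ≤ Real.sqrt (a ^ 2 + e) := Real.le_sqrt_of_sq_le (by linarith)
  have hset : {w : ℂ | a ≤ ‖w‖ ∧ ‖w‖ ^ 2 < a ^ 2 + e}
      = Metric.ball 0 (Real.sqrt (a ^ 2 + e)) \ Metric.ball 0 a := by
    ext w
    simp only [Set.mem_setOf_eq, Set.mem_diff, mem_ball_zero_iff, not_lt]
    rw [Real.lt_sqrt (norm_nonneg w)]
    tauto
  rw [hset, measure_diff (Metric.ball_subset_ball hb) measurableSet_ball.nullMeasurableSet
    measure_ball_lt_top.ne, Complex.volume_ball, Complex.volume_ball,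
    ← ENNReal.ofReal_pow (Real.sqrt_nonneg _), Real.sq_sqrt (by positivity),
    ← ENNReal.ofReal_pow ha, ENNReal.ofReal_add (by positivity) he.le, add_mul,
    ENNReal.add_sub_cancel_left (ENNReal.mul_ne_top ENNReal.ofReal_ne_top ENNReal.coe_ne_top)]

/-- For `2 < α < 3`, any monomial `z^p w^q` with `p + q ≥ 2` fails to be square
integrable on `D(α)`: `∫_{D(α)} |z^p w^q|² dV = +∞`. -/
theorem stmt1 (α : ℝ) (hα1 : 2 < α) (hα2 : α < 3) (p q : ℕ) (hpq : 2 ≤ p + q) :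
    (∫⁻ x in HuangLiDomain α, ENNReal.ofReal (‖x.1 ^ p * x.2 ^ q‖ ^ 2)) = ⊤ := by
  set n := p + q with hn
  set ε : ℕ → ℝ := fun k => ((16:ℝ) * 4 ^ k) ^ (-α) with hεdef
  have hεpos : ∀ k, 0 < ε k := fun k => Real.rpow_pos_of_pos (by positivity) _
  have hone4 : ∀ k : ℕ, (1:ℝ) ≤ 4 ^ k := fun k => one_le_pow₀ (by norm_num)
  have hεle1 : ∀ k, ε k ≤ 1 := fun k =>
    Real.rpow_le_one_of_one_le_of_nonpos (by nlinarith [hone4 k]) (by linarith)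
  set T : ℕ → Set (ℂ × ℂ) := fun k =>
    {x | (2:ℝ) ^ k ≤ ‖x.1‖ ∧ ‖x.1‖ ^ 2 < ((2:ℝ) ^ k) ^ 2 + 3 * 4 ^ k ∧
      ‖x.1‖ ≤ ‖x.2‖ ∧ ‖x.2‖ ^ 2 < ‖x.1‖ ^ 2 + ε k} with hTdef
  have h4k : ∀ k : ℕ, ((2:ℝ) ^ k) ^ 2 = 4 ^ k := by
    intro k; rw [← pow_mul, mul_comm, pow_mul]; norm_num
  have hone_le : ∀ k : ℕ, (1:ℝ) ≤ 4 ^ k := hone4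
  -- measurability
  have m1 : Measurable fun x : ℂ × ℂ => ‖x.1‖ := measurable_fst.norm
  have m2 : Measurable fun x : ℂ × ℂ => ‖x.2‖ := measurable_snd.norm
  have hTmeas : ∀ k, MeasurableSet (T k) := by
    intro k
    exact ((measurableSet_le measurable_const m1).inter
      (((measurableSet_lt (m1.pow_const 2) measurable_const)).inter
      ((measurableSet_le m1 m2).inter
      (measurableSet_lt (m2.pow_const 2) ((m1.pow_const 2).add_const (ε k))))))
  -- T k ⊆ D
  have hsub : ∀ k, T k ⊆ HuangLiDomain α := by
    intro k x hx
    obtain ⟨h1, h2, h3, h4⟩ := hx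
    have hz0 : (0:ℝ) ≤ ‖x.1‖ := norm_nonneg _
    have habs : |‖x.2‖ ^ 2 - ‖x.1‖ ^ 2| = ‖x.2‖ ^ 2 - ‖x.1‖ ^ 2 := by
      rw [abs_of_nonneg]; nlinarith [pow_le_pow_left₀ hz0 h3 2]
    have hsum : 1 + ‖x.1‖ ^ 2 + ‖x.2‖ ^ 2 ≤ 16 * 4 ^ k := by
      have := h4k k; have := hεle1 k; have := hone_le k; nlinarith
    have hεle : ε k ≤ (1 + ‖x.1‖ ^ 2 + ‖x.2‖ ^ 2) ^ (-α) :=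
      Real.rpow_le_rpow_of_nonpos (by positivity) hsum (by linarith)
    show |‖x.2‖ ^ 2 - ‖x.1‖ ^ 2| < (1 + ‖x.1‖ ^ 2 + ‖x.2‖ ^ 2) ^ (-α)
    rw [habs]; linarith
  -- pairwise disjoint
  have hdisj' : ∀ k l : ℕ, k < l → Disjoint (T k) (T l) := by
    intro k l hkl
    rw [Set.disjoint_left]
    rintro x ⟨_, h2, _, _⟩ ⟨h1', _, _, _⟩
    have : ((2:ℝ) ^ k) ^ 2 + 3 * 4 ^ k = ((2:ℝ) ^ (k + 1)) ^ 2 := by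
      rw [h4k, h4k]; ring
    have hle : ((2:ℝ) ^ (k + 1)) ≤ 2 ^ l := pow_le_pow_right₀ (by norm_num) hkl
    have : ‖x.1‖ < 2 ^ (k + 1) := by
      nlinarith [norm_nonneg x.1, pow_pos (by norm_num : (0:ℝ) < 2) (k+1)]
    linarith
  have hdisj : Pairwise (Function.onFun Disjoint T) := by
    intro k l hkl
    rcases hkl.lt_or_gt with h | h
    · exact hdisj' k l h
    · exact (hdisj' l k h).symm
  -- per-annulus lower bound
  set c : ℝ := 3 * π ^ 2 * (16:ℝ) ^ (-α) with hc
  have hcpos : 0 < c := by positivity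
  have key : ∀ k : ℕ, ENNReal.ofReal c ≤ ∫⁻ x in T k, ENNReal.ofReal (‖x.1 ^ p * x.2 ^ q‖ ^ 2) := by
    intro k
    set L : ℝ := ((2:ℝ) ^ k) ^ (2 * n) with hL
    -- pointwise bound
    have hpt : ∀ x ∈ T k, ENNReal.ofReal L ≤ ENNReal.ofReal (‖x.1 ^ p * x.2 ^ q‖ ^ 2) := by
      rintro x ⟨h1, _, h3, _⟩
      apply ENNReal.ofReal_le_ofReal
      have hw : (2:ℝ) ^ k ≤ ‖x.2‖ := h1.trans h3
      have h2k : (0:ℝ) ≤ 2 ^ k := by positivity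
      rw [norm_mul, norm_pow, norm_pow, mul_pow, ← pow_mul, ← pow_mul, hL]
      have e1 : ((2:ℝ) ^ k) ^ (p * 2) ≤ ‖x.1‖ ^ (p * 2) := pow_le_pow_left₀ h2k h1 _
      have e2 : ((2:ℝ) ^ k) ^ (q * 2) ≤ ‖x.2‖ ^ (q * 2) := pow_le_pow_left₀ h2k hw _
      calc ((2:ℝ) ^ k) ^ (2 * n) = ((2:ℝ) ^ k) ^ (p * 2) * ((2:ℝ) ^ k) ^ (q * 2) := by
            rw [← pow_add]; congr 1; omega
        _ ≤ ‖x.1‖ ^ (p * 2) * ‖x.2‖ ^ (q * 2) :=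
            mul_le_mul e1 e2 (by positivity) (by positivity)
    have step1 : ENNReal.ofReal L * volume (T k)
        ≤ ∫⁻ x in T k, ENNReal.ofReal (‖x.1 ^ p * x.2 ^ q‖ ^ 2) := by
      rw [← setLIntegral_const (T k) (ENNReal.ofReal L)]
      exact setLIntegral_mono' (hTmeas k) hpt
    -- volume of T k
    set A : Set ℂ := {z | (2:ℝ) ^ k ≤ ‖z‖ ∧ ‖z‖ ^ 2 < ((2:ℝ) ^ k) ^ 2 + 3 * 4 ^ k} with hA
    have hAmeas : MeasurableSet A :=
      (measurableSet_le measurable_const measurable_norm).inter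
        (measurableSet_lt (measurable_norm.pow_const 2) measurable_const)
    have hfib : ∀ z : ℂ, volume (Prod.mk z ⁻¹' T k)
        = A.indicator (fun _ => ENNReal.ofReal (ε k) * NNReal.pi) z := by
      intro z
      by_cases hz : z ∈ A
      · rw [Set.indicator_of_mem hz]
        have hset : Prod.mk z ⁻¹' T k = {w : ℂ | ‖z‖ ≤ ‖w‖ ∧ ‖w‖ ^ 2 < ‖z‖ ^ 2 + ε k} := by
          ext w
          simp only [Set.mem_preimage, hTdef, Set.mem_setOf_eq]
          exact ⟨fun ⟨_, _, h3, h4⟩ => ⟨h3, h4⟩, fun ⟨h3, h4⟩ => ⟨hz.1, hz.2, h3, h4⟩⟩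
        rw [hset, annulus_vol (norm_nonneg z) (hεpos k)]
      · rw [Set.indicator_of_notMem hz]
        have : Prod.mk z ⁻¹' T k = (∅ : Set ℂ) := by
          ext w
          simp only [Set.mem_preimage, hTdef, Set.mem_setOf_eq, Set.mem_empty_iff_false,
            iff_false]
          rintro ⟨h1, h2, _, _⟩
          exact hz ⟨h1, h2⟩
        rw [this, measure_empty]
    have hvolA : volume A = ENNReal.ofReal (3 * 4 ^ k) * NNReal.pi :=
      annulus_vol (by positivity) (by positivity)
    have hvolT : volume (T k) = ENNReal.ofReal (ε k) * NNReal.pi * (ENNReal.ofReal (3 * 4 ^ k) * NNReal.pi) := by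
      rw [MeasureTheory.Measure.volume_eq_prod, Measure.prod_apply (hTmeas k)]
      simp_rw [hfib]
      rw [lintegral_indicator hAmeas, setLIntegral_const, hvolA]
    -- real inequality
    have hπ : ((NNReal.pi : ℝ≥0∞)) = ENNReal.ofReal π := by
      rw [← NNReal.coe_real_pi, ENNReal.ofReal_coe_nnreal]
    have hreal : c ≤ L * (ε k * π * (3 * 4 ^ k * π)) := by
      have hεeq : ε k = (16:ℝ) ^ (-α) * ((4:ℝ) ^ k) ^ (-α) := by
        rw [hεdef]; exact Real.mul_rpow (by norm_num) (by positivity)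
      have hLeq : L = ((4:ℝ) ^ k) ^ (n : ℝ) := by
        rw [hL, pow_mul, h4k, Real.rpow_natCast]
      have hbig : (1:ℝ) ≤ L * ((4:ℝ) ^ k) ^ (-α) * 4 ^ k := by
        have : L * ((4:ℝ) ^ k) ^ (-α) * 4 ^ k = ((4:ℝ) ^ k) ^ ((n : ℝ) + -α + 1) := by
          rw [hLeq, Real.rpow_add (by positivity), Real.rpow_add (by positivity),
            Real.rpow_one]
        rw [this]
        apply Real.one_le_rpow (hone_le k)
        have : (2:ℝ) ≤ (n : ℝ) := by exact_mod_cast hpq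
        linarith
      have h16 : (0:ℝ) < (16:ℝ) ^ (-α) := Real.rpow_pos_of_pos (by norm_num) _
      have hLpos : 0 < L := by rw [hLeq]; positivity
      have h4kpos : (0:ℝ) < 4 ^ k := by positivity
      have h4ka : (0:ℝ) < ((4:ℝ) ^ k) ^ (-α) := Real.rpow_pos_of_pos h4kpos _
      have hπpos := Real.pi_pos
      calc c = 3 * π ^ 2 * (16:ℝ) ^ (-α) * 1 := by rw [hc, mul_one]
        _ ≤ 3 * π ^ 2 * (16:ℝ) ^ (-α) * (L * ((4:ℝ) ^ k) ^ (-α) * 4 ^ k) := by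
            gcongr
        _ = L * ((16:ℝ) ^ (-α) * ((4:ℝ) ^ k) ^ (-α) * π * (3 * 4 ^ k * π)) := by ring
        _ = L * (ε k * π * (3 * 4 ^ k * π)) := by rw [hεeq]
    refine le_trans ?_ step1
    rw [hvolT, hπ]
    have hLnn : 0 ≤ L := by positivity
    rw [← ENNReal.ofReal_mul (hεpos k).le, ← ENNReal.ofReal_mul (by positivity),
      ← ENNReal.ofReal_mul (by positivity : (0:ℝ) ≤ ε k * π),
      ← ENNReal.ofReal_mul hLnn]
    exact ENNReal.ofReal_le_ofReal hreal
  -- conclude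
  refine top_le_iff.mp ?_
  calc (⊤ : ℝ≥0∞) = ∑' _ : ℕ, ENNReal.ofReal c :=
        (ENNReal.tsum_const_eq_top_of_ne_zero (ENNReal.ofReal_pos.mpr hcpos).ne').symm
    _ ≤ ∑' k : ℕ, ∫⁻ x in T k, ENNReal.ofReal (‖x.1 ^ p * x.2 ^ q‖ ^ 2) :=
        ENNReal.tsum_le_tsum key
    _ = ∫⁻ x in ⋃ k, T k, ENNReal.ofReal (‖x.1 ^ p * x.2 ^ q‖ ^ 2) :=
        (lintegral_iUnion hTmeas hdisj _).symm
    _ ≤ ∫⁻ x in HuangLiDomain α, ENNReal.ofReal (‖x.1 ^ p * x.2 ^ q‖ ^ 2) :=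
        lintegral_mono_set (Set.iUnion_subset hsub)
end

section
/- For each multi-index α ∈ ℕ₀ⁿ and each q ∈ ℕ₀, the monomial z^α w^q is square-integrable on the Hartogs domain D = {(z,w) ∈ ℂⁿ × ℂ : |w|² < e^{−|z|²}}, and ∫_D |z^α w^q|² dV = π^{n+1} α! / (q+1)^{|α|+n+1}. -/
open MeasureTheory Real Set


lemma gauss_int_C {c : ℝ} (hc : 0 < c) : Integrable (fun v : ℂ => rexp (-c * ‖v‖^2)) := by
  have h := (GaussianFourier.integrable_cexp_neg_mul_sq_norm_add (V := ℂ)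
    (b := (c : ℂ)) (by simpa using hc) 0 0).norm
  refine h.congr (Filter.Eventually.of_forall fun v => ?_)
  simp [Complex.norm_exp]
  norm_cast
  exact Or.inl rfl

lemma moment_int {c : ℝ} (hc : 0 < c) (k : ℕ) :
    Integrable (fun z : ℂ => ‖z‖ ^ (2*k) * rexp (-c * ‖z‖^2)) := by
  refine ((gauss_int_C (c := c/2) (by positivity)).const_mul
    ((k.factorial : ℝ) * (2/c)^k)).mono ?_ (Filter.Eventually.of_forall fun z => ?_)
  · exact (Continuous.mul (by fun_prop) (by fun_prop)).aestronglyMeasurable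
  · rw [norm_of_nonneg (by positivity), norm_of_nonneg (by positivity)]
    have h1 : (c/2 * ‖z‖^2)^k / k.factorial ≤ rexp (c/2 * ‖z‖^2) :=
      Real.pow_div_factorial_le_exp _ (by positivity) k
    have h2 : ‖z‖ ^ (2*k) ≤ (k.factorial : ℝ) * (2/c)^k * rexp (c/2 * ‖z‖^2) := by
      rw [pow_mul]
      calc (‖z‖^2)^k = (k.factorial : ℝ) * (2/c)^k * ((c/2 * ‖z‖^2)^k / k.factorial) := by
            rw [mul_pow]; field_simp
            rw [mul_assoc, ← mul_pow, div_mul_div_comm, mul_comm 2 c, div_self (by positivity), one_pow, mul_one]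
        _ ≤ _ := by
            apply mul_le_mul_of_nonneg_left h1 (by positivity)
    calc ‖z‖ ^ (2*k) * rexp (-c * ‖z‖^2)
        ≤ ((k.factorial : ℝ) * (2/c)^k * rexp (c/2 * ‖z‖^2)) * rexp (-c * ‖z‖^2) :=
          mul_le_mul_of_nonneg_right h2 (le_of_lt (exp_pos _))
      _ = (k.factorial : ℝ) * (2/c)^k * rexp (-(c/2) * ‖z‖^2) := by
          rw [mul_assoc, ← Real.exp_add]; ring_nf

lemma moment_val {c : ℝ} (hc : 0 < c) (k : ℕ) :
    ∫ z : ℂ, ‖z‖ ^ (2*k) * rexp (-c * ‖z‖^2) = π * k.factorial / c^(k+1) := by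
  have h := Complex.integral_rpow_mul_exp_neg_mul_rpow (p := 2) (q := 2*(k:ℝ))
    one_le_two (by have := Nat.cast_nonneg (α := ℝ) k; linarith) hc
  have he : ∀ z : ℂ, ‖z‖ ^ (2*(k:ℝ)) * rexp (-c * ‖z‖ ^ (2:ℝ))
      = ‖z‖ ^ (2*k) * rexp (-c * ‖z‖^2) := by
    intro z
    rw [show (2*(k:ℝ)) = ((2*k : ℕ) : ℝ) by push_cast; ring, Real.rpow_natCast,
      show ((2:ℝ)) = ((2 : ℕ) : ℝ) by norm_num, Real.rpow_natCast]
  rw [show (∫ z : ℂ, ‖z‖ ^ (2*k) * rexp (-c * ‖z‖^2))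
    = ∫ z : ℂ, ‖z‖ ^ (2*(k:ℝ)) * rexp (-c * ‖z‖ ^ (2:ℝ)) from by simp_rw [he], h]
  rw [show (2*(k:ℝ) + 2)/2 = (k : ℝ) + 1 by ring, Real.Gamma_nat_eq_factorial,
    show (-(2*(k:ℝ) + 2)/2) = -((k:ℝ)+1) by ring, Real.rpow_neg hc.le,
    show ((k:ℝ) + 1) = ((k+1 : ℕ) : ℝ) by push_cast; ring, Real.rpow_natCast]
  field_simp

lemma disk_val (q : ℕ) {R : ℝ} (hR : 0 < R) :
    ∫ w in Metric.ball (0:ℂ) R, ‖w‖^(2*q) = π * R^(2*q+2) / (q+1) := by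
  rw [← integral_indicator measurableSet_ball]
  rw [← Complex.integral_comp_polarCoord_symm
    (f := (Metric.ball (0:ℂ) R).indicator (fun w => ‖w‖^(2*q)))]
  rw [polarCoord_target]
  have key : ∀ p ∈ Ioi (0:ℝ) ×ˢ Ioo (-π) π,
      p.1 • (Metric.ball (0:ℂ) R).indicator (fun w => ‖w‖^(2*q)) (Complex.polarCoord.symm p)
      = (Ioo (0:ℝ) R).indicator (fun r => r^(2*q+1)) p.1 * 1 := by
    rintro ⟨r, θ⟩ ⟨hr, -⟩
    simp only [mem_Ioi] at hr
    have hmem : Complex.polarCoord.symm (r, θ) ∈ Metric.ball (0:ℂ) R ↔ r < R := by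
      rw [mem_ball_zero_iff, Complex.norm_polarCoord_symm, abs_of_pos hr]
    by_cases h : r < R
    · rw [indicator_of_mem (hmem.mpr h), indicator_of_mem (by exact ⟨hr, h⟩ : r ∈ Ioo 0 R)]
      simp only [smul_eq_mul, Complex.norm_polarCoord_symm, abs_of_pos hr,
        mul_one]
      ring
    · rw [indicator_of_notMem (fun hc => h (hmem.mp hc)),
        indicator_of_notMem (fun hc => h hc.2)]
      simp
  rw [setIntegral_congr_fun (by measurability) key, Measure.volume_eq_prod,
    setIntegral_prod_mul ((Ioo (0:ℝ) R).indicator (fun r => r^(2*q+1))) (fun _ => (1:ℝ))]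
  rw [integral_indicator measurableSet_Ioo,
    Measure.restrict_restrict measurableSet_Ioo,
    Set.inter_eq_self_of_subset_left Set.Ioo_subset_Ioi_self]
  have h1 : (∫ r in Ioo (0:ℝ) R, r^(2*q+1)) = R^(2*q+2)/(2*q+2) := by
    rw [← integral_Ioc_eq_integral_Ioo, ← intervalIntegral.integral_of_le hR.le]
    open intervalIntegral in rw [integral_pow]
    norm_num [pow_succ]
    ring
  have h2 : (∫ (_ : ℝ) in Ioo (-π) π, (1:ℝ)) = 2*π := by
    simp [Real.volume_Ioo, ENNReal.toReal_ofReal (by positivity : (0:ℝ) ≤ π + π)]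
    rw [max_eq_left (by positivity)]
    ring
  rw [h1, h2]
  have h3 : (2*(q:ℝ)+2) ≠ 0 := by positivity
  field_simp


/-- The Hartogs domain `D = {(z,w) ∈ ℂⁿ × ℂ : |w|² < e^{−|z|²}}`. -/
def HartogsDomain (n : ℕ) : Set ((Fin n → ℂ) × ℂ) :=
  {p | ‖p.2‖ ^ 2 < Real.exp (-(∑ i, ‖p.1 i‖ ^ 2))}

/-- Each monomial `z^α w^q` is square integrable on the Hartogs domain, with
`∫_D |z^α w^q|² dV = π^{n+1} α! / (q+1)^{|α|+n+1}`. -/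
theorem stmt5 (n : ℕ) (α : Fin n → ℕ) (q : ℕ) :
    IntegrableOn
      (fun p : (Fin n → ℂ) × ℂ => ‖(∏ i, p.1 i ^ α i) * p.2 ^ q‖ ^ 2)
      (HartogsDomain n) volume ∧
    (∫ p in HartogsDomain n, ‖(∏ i, p.1 i ^ α i) * p.2 ^ q‖ ^ 2) =
      π ^ (n + 1) * (∏ i, Nat.factorial (α i)) / (q + 1) ^ ((∑ i, α i) + n + 1) := by
  set c : ℝ := (q : ℝ) + 1 with hc_def
  have hc : 0 < c := by positivity
  set s : (Fin n → ℂ) → ℝ := fun z => ∑ i, ‖z i‖ ^ 2 with hs_def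
  set R : (Fin n → ℂ) → ℝ := fun z => rexp (-(s z)/2) with hR_def
  set g : (Fin n → ℂ) → ℝ := fun z => ∏ i, ‖z i‖ ^ (2 * α i) with hg_def
  set h : ℂ → ℝ := fun w => ‖w‖ ^ (2 * q) with hh_def
  have hgnn : ∀ z, 0 ≤ g z := fun z => by rw [hg_def]; positivity
  have hhnn : ∀ w, 0 ≤ h w := fun w => by rw [hh_def]; positivity
  have f_eq : ∀ p : (Fin n → ℂ) × ℂ,
      ‖(∏ i, p.1 i ^ α i) * p.2 ^ q‖ ^ 2 = g p.1 * h p.2 := by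
    intro p
    simp only [hg_def, hh_def, norm_mul, norm_prod, norm_pow, mul_pow, ← Finset.prod_pow,
      pow_mul']
  have hmeasD : MeasurableSet (HartogsDomain n) := by
    have : HartogsDomain n
        = {p : (Fin n → ℂ) × ℂ | ‖p.2‖ ^ 2 < rexp (-(∑ i, ‖p.1 i‖ ^ 2))} := rfl
    rw [this]
    exact measurableSet_lt (by fun_prop) (by fun_prop)
  have hsec : ∀ (z : Fin n → ℂ) (w : ℂ),
      (z, w) ∈ HartogsDomain n ↔ w ∈ Metric.ball (0 : ℂ) (R z) := by
    intro z w
    have hR2 : (R z) ^ 2 = rexp (-(s z)) := by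
      rw [hR_def, sq, ← Real.exp_add]; ring_nf
    rw [mem_ball_zero_iff, show (z, w) ∈ HartogsDomain n ↔ ‖w‖ ^ 2 < rexp (-(s z)) from Iff.rfl,
      ← hR2]
    exact pow_lt_pow_iff_left₀ (norm_nonneg _) (exp_pos _).le two_ne_zero
  have hΦi : ∀ i : Fin n, Integrable (fun x : ℂ => ‖x‖ ^ (2 * α i) * rexp (-c * ‖x‖ ^ 2)) :=
    fun i => moment_int hc (α i)
  have e1 : (fun z : Fin n → ℂ => g z * rexp (-c * s z))
      = fun z => ∏ i, (‖z i‖ ^ (2 * α i) * rexp (-c * ‖z i‖ ^ 2)) := by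
    funext z
    simp only [hg_def, hs_def, Finset.prod_mul_distrib, ← Real.exp_sum, Finset.mul_sum, neg_mul]
  have hΦ : Integrable (fun z : Fin n → ℂ => g z * rexp (-c * s z)) := by
    rw [e1]
    exact Integrable.fintype_prod (E := ℂ)
      (f := fun (i : Fin n) (x : ℂ) => ‖x‖ ^ (2 * α i) * rexp (-c * ‖x‖ ^ 2)) hΦi
  have hΦval : ∫ z : Fin n → ℂ, g z * rexp (-c * s z)
      = ∏ i, (π * ((α i).factorial : ℝ) / c ^ (α i + 1)) := by
    rw [e1, MeasureTheory.volume_pi, integral_fintype_prod_eq_prod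
      (f := fun (i : Fin n) (x : ℂ) => ‖x‖ ^ (2 * α i) * rexp (-c * ‖x‖ ^ 2))]
    exact Finset.prod_congr rfl fun i _ => moment_val hc (α i)
  have hdisk : ∀ z : Fin n → ℂ,
      ∫⁻ w in Metric.ball (0 : ℂ) (R z), ENNReal.ofReal (h w)
        = ENNReal.ofReal (π * (R z) ^ (2 * q + 2) / c) := by
    intro z
    have hint : IntegrableOn h (Metric.ball (0 : ℂ) (R z)) := by
      refine ((Continuous.continuousOn ?_).integrableOn_compact
        (isCompact_closedBall (0 : ℂ) (R z))).mono_set Metric.ball_subset_closedBall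
      rw [hh_def]; fun_prop
    rw [← ofReal_integral_eq_lintegral_ofReal hint
      (Filter.Eventually.of_forall fun w => hhnn w), hh_def, disk_val q (exp_pos _)]
  have hRpow : ∀ z, π * (R z) ^ (2 * q + 2) / c = (π / c) * rexp (-c * s z) := by
    intro z
    have : (R z) ^ (2 * q + 2) = rexp (-c * s z) := by
      rw [hR_def, ← Real.exp_nat_mul]
      congr 1
      push_cast [hc_def]
      ring
    rw [this]; ring
  have key : ∫⁻ p in HartogsDomain n, ENNReal.ofReal (g p.1 * h p.2)
      = ENNReal.ofReal ((π / c) * ∫ z : Fin n → ℂ, g z * rexp (-c * s z)) := by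
    have hmF : Measurable fun p : (Fin n → ℂ) × ℂ => ENNReal.ofReal (g p.1 * h p.2) := by
      rw [hg_def, hh_def]; fun_prop
    rw [← lintegral_indicator hmeasD, Measure.volume_eq_prod,
      lintegral_prod _ ((hmF.indicator hmeasD).aemeasurable)]
    have inner : ∀ z : Fin n → ℂ,
        (∫⁻ w, (HartogsDomain n).indicator
            (fun p : (Fin n → ℂ) × ℂ => ENNReal.ofReal (g p.1 * h p.2)) (z, w))
          = ENNReal.ofReal ((π / c) * (g z * rexp (-c * s z))) := by
      intro z
      have e2 : ∀ w : ℂ, (HartogsDomain n).indicator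
          (fun p : (Fin n → ℂ) × ℂ => ENNReal.ofReal (g p.1 * h p.2)) (z, w)
          = (Metric.ball (0 : ℂ) (R z)).indicator
              (fun w => ENNReal.ofReal (g z) * ENNReal.ofReal (h w)) w := by
        intro w
        by_cases hw : (z, w) ∈ HartogsDomain n
        · rw [indicator_of_mem hw, indicator_of_mem ((hsec z w).mp hw),
            ← ENNReal.ofReal_mul (hgnn z)]
        · rw [indicator_of_notMem hw, indicator_of_notMem (fun hb => hw ((hsec z w).mpr hb))]
      rw [lintegral_congr e2, lintegral_indicator measurableSet_ball,
        lintegral_const_mul _ (by rw [hh_def]; fun_prop), hdisk z,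
        ← ENNReal.ofReal_mul (hgnn z), hRpow z]
      congr 1
      ring
    rw [lintegral_congr inner,
      ← ofReal_integral_eq_lintegral_ofReal (hΦ.const_mul (π / c))
        (Filter.Eventually.of_forall fun z => by
          have := hgnn z
          have h2 : (0:ℝ) ≤ rexp (-c * s z) := (exp_pos _).le
          positivity), MeasureTheory.integral_const_mul]
  have hnn : ∀ p : (Fin n → ℂ) × ℂ, 0 ≤ g p.1 * h p.2 :=
    fun p => mul_nonneg (hgnn p.1) (hhnn p.2)
  have hcont : Continuous fun p : (Fin n → ℂ) × ℂ => ‖(∏ i, p.1 i ^ α i) * p.2 ^ q‖ ^ 2 := by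
    fun_prop
  constructor
  · refine ⟨hcont.aestronglyMeasurable.restrict, ?_⟩
    rw [hasFiniteIntegral_iff_ofReal
      (Filter.Eventually.of_forall fun p => by positivity)]
    have : (∫⁻ p in HartogsDomain n,
        ENNReal.ofReal (‖(∏ i, p.1 i ^ α i) * p.2 ^ q‖ ^ 2))
        = ∫⁻ p in HartogsDomain n, ENNReal.ofReal (g p.1 * h p.2) :=
      lintegral_congr fun p => by rw [f_eq p]
    rw [this, key]
    exact ENNReal.ofReal_lt_top
  · rw [setIntegral_congr_fun hmeasD (fun p _ => f_eq p),
      integral_eq_lintegral_of_nonneg_ae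
        (Filter.Eventually.of_forall fun p => hnn p)
        (by
          apply Continuous.aestronglyMeasurable ?_ |>.restrict
          rw [hg_def, hh_def]; fun_prop),
      key, hΦval, ENNReal.toReal_ofReal (by positivity)]
    rw [Finset.prod_div_distrib, Finset.prod_mul_distrib, Finset.prod_const,
      Finset.prod_pow_eq_pow_sum,
      show ∑ i : Fin n, (α i + 1) = (∑ i, α i) + n by rw [Finset.sum_add_distrib]; simp,
      Finset.card_univ, Fintype.card_fin]
    push_cast
    have hcn : c ≠ 0 := ne_of_gt hc
    field_simp
    ring
end

section
/- Let D ⊆ ℂⁿ be open with 0 ∈ D and suppose the Bergman kernel of D satisfies K_D(z,w) = φ₁(z) · conj(φ₁(w)) · e^{⟨z,w⟩} for all z, w ∈ D, where φ₁ = K_D(·,0)/K_D(0,0)^{1/2} and φ₁(0) > 0. Then for every multi-index α, the function z ↦ z^α φ₁(z) belongs to A²(D). -/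
open MeasureTheory

/-- Membership in the Bergman space `A²(D)`: holomorphic and square integrable on `D`. -/
def MemA2 {n : ℕ} (D : Set (Fin n → ℂ)) (f : (Fin n → ℂ) → ℂ) : Prop :=
  DifferentiableOn ℂ f D ∧ IntegrableOn (fun z => ‖f z‖ ^ 2) D volume

/-- `φ₁ = K(·,0)/K(0,0)^{1/2}`. -/
noncomputable def bergPhi {n : ℕ} (K : (Fin n → ℂ) → (Fin n → ℂ) → ℂ)
    (z : Fin n → ℂ) : ℂ :=
  K z 0 / (Real.sqrt (K 0 0).re : ℂ)

-- auxiliary: the corner unit vectors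
noncomputable def bergU (b : Bool × Bool) : ℂ :=
  (if b.1 then 1 else -1) + (if b.2 then 1 else -1) * Complex.I

lemma bergU_re_mul (b : Bool × Bool) (v : ℂ) :
    (v * starRingEnd ℂ (bergU b)).re
      = (if b.1 then v.re else -v.re) + (if b.2 then v.im else -v.im) := by
  obtain ⟨b1, b2⟩ := b
  cases b1 <;> cases b2 <;>
    simp [bergU, Complex.mul_re, Complex.conj_re, Complex.conj_im] <;> ring

lemma bergU_norm (b : Bool × Bool) : ‖bergU b‖ ≤ 2 := by
  obtain ⟨b1, b2⟩ := b
  have h := norm_add_le ((if b1 then (1:ℂ) else -1)) ((if b2 then (1:ℂ) else -1) * Complex.I)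
  have h1 : ‖(if b1 then (1:ℂ) else -1)‖ = 1 := by cases b1 <;> simp
  have h2 : ‖((if b2 then (1:ℂ) else -1) * Complex.I)‖ = 1 := by cases b2 <;> simp
  rw [h1, h2] at h
  rw [bergU]
  exact h.trans (by norm_num)

lemma if_decide_abs (x : ℝ) : (if decide (0 ≤ x) then x else -x) = |x| := by
  rcases le_or_gt 0 x with h | h
  · simp [h, abs_of_nonneg h]
  · simp [not_le.mpr h, abs_of_neg h]

lemma berg_pow_le (ε t : ℝ) (hε : 0 < ε) (ht : 0 ≤ t) (m : ℕ) :
    t ^ m ≤ (m.factorial / ε ^ m) * Real.exp (ε * t) := by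
  have h := Real.pow_div_factorial_le_exp (x := ε * t) (by positivity) m
  rw [mul_pow] at h
  have hεm : (0:ℝ) < ε ^ m := by positivity
  have hfac : (0:ℝ) < m.factorial := by positivity
  rw [div_le_iff₀ hfac] at h
  calc t ^ m = (ε ^ m * t ^ m) / ε ^ m := by field_simp
    _ ≤ (Real.exp (ε * t) * m.factorial) / ε ^ m := by gcongr
    _ = (m.factorial / ε ^ m) * Real.exp (ε * t) := by ring

/-- If the Bergman kernel of an open set `D ⊆ ℂⁿ` containing `0` factors as
`K(z,w) = φ₁(z) conj(φ₁(w)) e^{⟨z,w⟩}` with `φ₁ = K(·,0)/K(0,0)^{1/2}`, `φ₁(0) > 0`,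
then `z^α φ₁ ∈ A²(D)` for every multi-index `α`. -/
theorem stmt9 (n : ℕ) (D : Set (Fin n → ℂ)) (hD : IsOpen D) (h0 : (0 : Fin n → ℂ) ∈ D)
    (K : (Fin n → ℂ) → (Fin n → ℂ) → ℂ)
    (hherm : ∀ z w, K z w = starRingEnd ℂ (K w z))
    (hker : ∀ w ∈ D, MemA2 D (fun z => K z w))
    (hrepr : ∀ f, MemA2 D f → ∀ z ∈ D, f z = ∫ w in D, K z w * f w)
    (hpos0 : 0 < (bergPhi K 0).re ∧ (bergPhi K 0).im = 0)
    (hfact : ∀ z ∈ D, ∀ w ∈ D,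
      K z w = bergPhi K z * starRingEnd ℂ (bergPhi K w) *
        Complex.exp (∑ j, z j * starRingEnd ℂ (w j)))
    (α : Fin n → ℕ) :
    MemA2 D (fun z => (∏ i, z i ^ α i) * bergPhi K z) := by
  set φ := bergPhi K with hφdef
  -- differentiability of φ
  have hφdiff : DifferentiableOn ℂ φ D := by
    have h1 : DifferentiableOn ℂ (fun z => K z 0) D := (hker 0 h0).1
    have h2 : DifferentiableOn ℂ
        (fun z => K z 0 * (((Real.sqrt (K 0 0).re : ℝ) : ℂ))⁻¹) D := h1.mul_const _
    intro z hz
    have := h2 z hz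
    rw [hφdef]; delta bergPhi
    simpa [div_eq_mul_inv] using this
  have hmono : Differentiable ℂ (fun z : Fin n → ℂ => ∏ i, z i ^ α i) := by
    classical
    have H : ∀ u : Finset (Fin n),
        Differentiable ℂ (fun z : Fin n → ℂ => ∏ i ∈ u, z i ^ α i) := by
      intro u
      induction u using Finset.induction with
      | empty => simpa using differentiable_const (1 : ℂ)
      | insert a s h ih =>
          simp only [Finset.prod_insert h]
          exact ((differentiable_pi.mp differentiable_id _).pow _).mul ih
    exact H Finset.univ
  have hfdiff : DifferentiableOn ℂ (fun z => (∏ i, z i ^ α i) * φ z) D :=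
    hmono.differentiableOn.mul hφdiff
  refine ⟨hfdiff, ?_⟩
  -- φ 0 ≠ 0 and a good ball
  have hφ0 : φ 0 ≠ 0 := by
    intro h
    rw [h] at hpos0
    simp at hpos0
  have hcont : ContinuousAt φ 0 :=
    (hφdiff.continuousOn.continuousAt (hD.mem_nhds h0))
  have hnhds : {z | z ∈ D ∧ φ z ≠ 0} ∈ nhds (0 : Fin n → ℂ) := by
    filter_upwards [hD.mem_nhds h0, hcont.eventually_ne hφ0] with z h1 h2
    exact ⟨h1, h2⟩
  obtain ⟨r, hr, hball⟩ := Metric.mem_nhds_iff.mp hnhds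
  set ε : ℝ := r / 3 with hεdef
  have hε : 0 < ε := by positivity
  -- the sample points
  set W : (Fin n → Bool × Bool) → (Fin n → ℂ) := fun s j => (ε : ℂ) * bergU (s j) with hWdef
  have hWmem : ∀ s, W s ∈ D ∧ φ (W s) ≠ 0 := by
    intro s
    apply hball
    rw [Metric.mem_ball, dist_zero_right]
    have : ‖W s‖ ≤ 2 * ε := by
      apply pi_norm_le_iff_of_nonneg (by positivity) |>.mpr
      intro j
      rw [hWdef]
      calc ‖(ε : ℂ) * bergU (s j)‖ = ε * ‖bergU (s j)‖ := by
            rw [norm_mul, Complex.norm_real, Real.norm_of_nonneg hε.le]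
        _ ≤ ε * 2 := by nlinarith [bergU_norm (s j), hε.le]
        _ = 2 * ε := by ring
    calc ‖W s‖ ≤ 2 * ε := this
      _ < r := by rw [hεdef]; linarith
  classical
  -- constants
  set C1 : ℝ := ∏ i, ((α i).factorial / ε ^ α i) with hC1
  have hC1pos : 0 < C1 := Finset.prod_pos fun i _ => by positivity
  set c : (Fin n → Bool × Bool) → ℝ := fun s => ‖φ (W s)‖⁻¹ with hc
  have hcpos : ∀ s, 0 < c s := fun s => by
    rw [hc]; exact inv_pos.mpr (norm_pos_iff.mpr (hWmem s).2)
  -- the dominating function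
  set N : ℝ := (Fintype.card (Fin n → Bool × Bool) : ℝ) with hN
  set g : (Fin n → ℂ) → ℝ :=
    fun z => C1 ^ 2 * N * ∑ s, (c s) ^ 2 * ‖K z (W s)‖ ^ 2 with hg
  have hgint : IntegrableOn g D volume := by
    apply Integrable.const_mul
    apply integrable_finset_sum
    intro s _
    exact ((hker (W s) (hWmem s).1).2).const_mul _
  -- key pointwise bound
  have hbound : ∀ z ∈ D, ‖(∏ i, z i ^ α i) * φ z‖ ≤ C1 * ∑ s, c s * ‖K z (W s)‖ := by
    intro z hz
    -- choice of signs
    set s₀ : Fin n → Bool × Bool := fun j => (decide (0 ≤ (z j).re), decide (0 ≤ (z j).im)) with hs₀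
    have hre : (∑ j, z j * starRingEnd ℂ (W s₀ j)).re
        = ε * ∑ j, (|(z j).re| + |(z j).im|) := by
      rw [Complex.re_sum, Finset.mul_sum]
      apply Finset.sum_congr rfl
      intro j _
      rw [hWdef]
      have : z j * starRingEnd ℂ ((ε:ℂ) * bergU (s₀ j))
          = (ε:ℂ) * (z j * starRingEnd ℂ (bergU (s₀ j))) := by
        rw [map_mul]; push_cast [Complex.conj_ofReal]; ring
      rw [this, Complex.re_ofReal_mul, bergU_re_mul]
      congr 1
      have e1 : (s₀ j).1 = decide (0 ≤ (z j).re) := by rw [hs₀]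
      have e2 : (s₀ j).2 = decide (0 ≤ (z j).im) := by rw [hs₀]
      rw [e1, e2, if_decide_abs, if_decide_abs]
    -- monomial bound
    have hmonob : ∏ i, ‖z i‖ ^ α i
        ≤ C1 * Real.exp (ε * ∑ j, (|(z j).re| + |(z j).im|)) := by
      have step : ∀ i ∈ Finset.univ, ‖z i‖ ^ α i
          ≤ ((α i).factorial / ε ^ α i) * Real.exp (ε * (|(z i).re| + |(z i).im|)) := by
        intro i _
        calc ‖z i‖ ^ α i ≤ (|(z i).re| + |(z i).im|) ^ α i := by
              apply pow_le_pow_left₀ (norm_nonneg _)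
              exact Complex.norm_le_abs_re_add_abs_im (z i)
          _ ≤ _ := berg_pow_le ε _ hε (by positivity) (α i)
      calc ∏ i, ‖z i‖ ^ α i
          ≤ ∏ i, ((α i).factorial / ε ^ α i) * Real.exp (ε * (|(z i).re| + |(z i).im|)) :=
            Finset.prod_le_prod (fun i _ => by positivity) step
        _ = C1 * Real.exp (ε * ∑ j, (|(z j).re| + |(z j).im|)) := by
            rw [Finset.prod_mul_distrib, hC1, ← Real.exp_sum, Finset.mul_sum]
    -- combine with the kernel factorization at s₀
    have hKs : ∀ s, ‖K z (W s)‖ = ‖φ z‖ * ‖φ (W s)‖ *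
        Real.exp ((∑ j, z j * starRingEnd ℂ (W s j)).re) := by
      intro s
      rw [hfact z hz (W s) (hWmem s).1]
      rw [norm_mul, norm_mul, Complex.norm_exp]
      simp [hφdef]
    have key : ‖(∏ i, z i ^ α i) * φ z‖ ≤ C1 * (c s₀ * ‖K z (W s₀)‖) := by
      have h1 : ‖∏ i, z i ^ α i‖ = ∏ i, ‖z i‖ ^ α i := by
        rw [norm_prod]; exact Finset.prod_congr rfl fun i _ => norm_pow _ _
      have hne : ‖φ (W s₀)‖ ≠ 0 := norm_ne_zero_iff.mpr (hWmem s₀).2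
      have halg : ∀ a x e : ℝ, a ≠ 0 → a⁻¹ * (x * a * e) = x * e := by
        intro a x e ha; field_simp
      have h2 : c s₀ * ‖K z (W s₀)‖
          = ‖φ z‖ * Real.exp ((∑ j, z j * starRingEnd ℂ (W s₀ j)).re) := by
        rw [hKs s₀]
        simp only [hc]
        exact halg _ _ _ hne
      rw [norm_mul, h1, h2, hre]
      calc (∏ i, ‖z i‖ ^ α i) * ‖φ z‖
          ≤ (C1 * Real.exp (ε * ∑ j, (|(z j).re| + |(z j).im|))) * ‖φ z‖ :=
            mul_le_mul_of_nonneg_right hmonob (norm_nonneg _)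
        _ = C1 * (‖φ z‖ * Real.exp (ε * ∑ j, (|(z j).re| + |(z j).im|))) := by ring
    refine key.trans ?_
    apply mul_le_mul_of_nonneg_left _ hC1pos.le
    apply Finset.single_le_sum (f := fun s => c s * ‖K z (W s)‖) (fun s _ => by positivity)
      (Finset.mem_univ s₀)
  -- assemble integrability
  have hmeas : AEStronglyMeasurable (fun z => ‖(∏ i, z i ^ α i) * φ z‖ ^ 2)
      (volume.restrict D) := by
    exact ((hfdiff.continuousOn.norm).pow 2).aestronglyMeasurable hD.measurableSet
  apply Integrable.mono' hgint hmeas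
  rw [ae_restrict_iff' hD.measurableSet]
  filter_upwards with z hz
  rw [Real.norm_of_nonneg (by positivity)]
  have h1 := hbound z hz
  have h2 : ‖(∏ i, z i ^ α i) * φ z‖ ^ 2 ≤ (C1 * ∑ s, c s * ‖K z (W s)‖) ^ 2 :=
    pow_le_pow_left₀ (norm_nonneg _) h1 2
  refine h2.trans ?_
  rw [mul_pow, hg]
  have h3 : (∑ s, c s * ‖K z (W s)‖) ^ 2
      ≤ N * ∑ s, (c s * ‖K z (W s)‖) ^ 2 := by
    rw [hN]
    have := sq_sum_le_card_mul_sum_sq (s := Finset.univ)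
      (f := fun s : Fin n → Bool × Bool => c s * ‖K z (W s)‖)
    rwa [Finset.card_univ] at this
  calc C1 ^ 2 * (∑ s, c s * ‖K z (W s)‖) ^ 2
      ≤ C1 ^ 2 * (N * ∑ s, (c s * ‖K z (W s)‖) ^ 2) :=
        mul_le_mul_of_nonneg_left h3 (by positivity)
    _ = C1 ^ 2 * N * ∑ s, (c s) ^ 2 * ‖K z (W s)‖ ^ 2 := by
        rw [← mul_assoc]; congr 1; exact Finset.sum_congr rfl fun s _ => by ring
end

section
/- On the diagonal of the Hartogs domain D = {(z,w) ∈ ℂⁿ × ℂ : |w|² < e^{−|z|²}}, the Bergman kernel satisfies K((z,0),(z,0)) = e^{|z|²}/π^{n+1} for all z ∈ ℂⁿ; consequently the restriction of the Bergman metric of D to ℂⁿ × {0} is the Euclidean metric i∂∂̄|z|². -/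
open Real

lemma exp_hasSum (x : ℝ) : HasSum (fun k : ℕ => x ^ k / k.factorial) (Real.exp x) := by
  have h := (Real.summable_pow_div_factorial x).hasSum
  have : Real.exp x = ∑' k : ℕ, x ^ k / k.factorial := by
    rw [Real.exp_eq_exp_ℝ, NormedSpace.exp_eq_tsum_div]
  rwa [← this] at h


lemma pi_hasSum : ∀ (n : ℕ) (f : Fin n → ℕ → ℝ) (S : Fin n → ℝ),
    (∀ i k, 0 ≤ f i k) → (∀ i, HasSum (f i) (S i)) →
    HasSum (fun α : Fin n → ℕ => ∏ i, f i (α i)) (∏ i, S i) := by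
  intro n
  induction n with
  | zero =>
    intro f S _ _
    simpa using hasSum_fintype (fun α : Fin 0 → ℕ => ∏ i, f i (α i))
  | succ n ih =>
    intro f S hpos hsum
    have h0 : HasSum (f 0) (S 0) := hsum 0
    set g : Fin n → ℕ → ℝ := fun i => f i.succ with hg
    set T : Fin n → ℝ := fun i => S i.succ with hT
    have htail : HasSum (fun α : Fin n → ℕ => ∏ i, g i (α i)) (∏ i, T i) :=
      ih g T (fun i k => hpos _ _) (fun i => hsum _)
    have htailpos : ∀ α : Fin n → ℕ, 0 ≤ ∏ i, g i (α i) := fun α =>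
      Finset.prod_nonneg fun i _ => hpos _ _
    have hmulsum : Summable (fun p : ℕ × (Fin n → ℕ) =>
        f 0 p.1 * ∏ i, g i (p.2 i)) :=
      Summable.mul_of_nonneg (f := f 0) (g := fun α : Fin n → ℕ => ∏ i, g i (α i))
        h0.summable htail.summable (fun k => hpos _ _) htailpos
    have hmul : HasSum (fun p : ℕ × (Fin n → ℕ) =>
        f 0 p.1 * ∏ i, g i (p.2 i)) (S 0 * ∏ i, T i) :=
      HasSum.mul (f := f 0) (g := fun α : Fin n → ℕ => ∏ i, g i (α i)) h0 htail hmulsum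
    have hequiv := ((Fin.consEquiv fun _ : Fin (n + 1) => ℕ).symm.hasSum_iff
      (f := fun p : ℕ × (Fin n → ℕ) => f 0 p.1 * ∏ i, g i (p.2 i))
      (a := S 0 * ∏ i, T i)).2 hmul
    rw [Fin.prod_univ_succ]
    convert hequiv using 2 with α
    · rw [Fin.prod_univ_succ]
      rfl

set_option maxHeartbeats 1000000 in
/-- On the slice `w = 0`, the Bergman kernel of the Hartogs domain
`D = {(z,w) ∈ ℂⁿ × ℂ : |w|² < e^{−|z|²}}` (computed from the orthogonal monomial
basis with `‖z^α w^q‖² = π^{n+1} α!/(q+1)^{|α|+n+1}`) equals `e^{|z|²}/π^{n+1}`;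
consequently `log K((z,0),(z,0)) = |z|² − (n+1) log π`, so the Bergman metric
restricted to `ℂⁿ × {0}` is the Euclidean metric `i∂∂̄|z|²`. -/
theorem stmt17 (n : ℕ) (z : Fin n → ℂ) :
    (∑' aq : (Fin n → ℕ) × ℕ,
        (((aq.2 : ℝ) + 1) ^ ((∑ i, aq.1 i) + n + 1) /
            (π ^ (n + 1) * ∏ i, (Nat.factorial (aq.1 i) : ℝ))) *
          (∏ i, ‖z i‖ ^ (2 * aq.1 i)) * ‖(0 : ℂ)‖ ^ (2 * aq.2)) =
      Real.exp (∑ i, ‖z i‖ ^ 2) / π ^ (n + 1) ∧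
    Real.log (Real.exp (∑ i, ‖z i‖ ^ 2) / π ^ (n + 1)) =
      (∑ i, ‖z i‖ ^ 2) - (n + 1) * Real.log π := by
  constructor
  · set F : (Fin n → ℕ) × ℕ → ℝ := fun aq =>
      (((aq.2 : ℝ) + 1) ^ ((∑ i, aq.1 i) + n + 1) /
            (π ^ (n + 1) * ∏ i, (Nat.factorial (aq.1 i) : ℝ))) *
          (∏ i, ‖z i‖ ^ (2 * aq.1 i)) * ‖(0 : ℂ)‖ ^ (2 * aq.2) with hF
    have hinj : Function.Injective (fun α : Fin n → ℕ => (α, 0)) :=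
      fun a b h => (Prod.mk.injEq _ _ _ _ ▸ h).1
    have hsupp : Function.support F ⊆ Set.range (fun α : Fin n → ℕ => (α, 0)) := by
      intro aq h
      rcases aq with ⟨α, q⟩
      rcases Nat.eq_zero_or_pos q with hq | hq
      · exact ⟨α, by simp [hq]⟩
      · exfalso
        apply h
        simp only [hF, norm_zero]
        rw [zero_pow (by omega)]
        ring
    rw [← hinj.tsum_eq hsupp]
    have key : HasSum (fun α : Fin n → ℕ => ∏ i, (‖z i‖ ^ 2) ^ (α i) / (α i).factorial)
        (Real.exp (∑ i, ‖z i‖ ^ 2)) := by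
      rw [Real.exp_sum]
      exact pi_hasSum n (fun i k => (‖z i‖ ^ 2) ^ k / (k.factorial : ℝ))
        (fun i => Real.exp (‖z i‖ ^ 2))
        (fun i k => div_nonneg (pow_nonneg (sq_nonneg _) _) (Nat.cast_nonneg _))
        (fun i => exp_hasSum _)
    have key2 : HasSum (fun α : Fin n → ℕ => F (α, 0))
        (Real.exp (∑ i, ‖z i‖ ^ 2) / π ^ (n + 1)) := by
      have := key.div_const (π ^ (n + 1))
      convert this using 2 with α
      · rfl
      simp only [hF, Nat.cast_zero, zero_add, one_pow, norm_zero, Nat.mul_zero, pow_zero,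
        mul_one, Finset.prod_div_distrib]
      rw [div_mul_eq_mul_div, one_mul, div_div]
      congr 1
      · exact Finset.prod_congr rfl fun i _ => by rw [pow_mul]
      · ring
    exact key2.tsum_eq
  · have hπ : (0:ℝ) < π := Real.pi_pos
    rw [Real.log_div (Real.exp_ne_zero _) (by positivity), Real.log_exp, Real.log_pow]
    push_cast
    ring
end
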